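/- Let C be a commutative ℚ-algebra and λ ∈ C. Let τ_{λ,n}(t) = (1/n!)·∏_{j=0}^{n−1}(t − j·λ), a polynomial of degree n in C[t], and let e_λ(x) = ∑_{m=1}^{∞} λ^{m−1}·x^m/m! ∈ C[[x]]. Then for all n, k ∈ ℕ: ∑_{m=0}^{n} m!·(coefficient of t^m in τ_{λ,n}(t))·(coefficient of x^m in e_λ(x)^k) = δ_{n,k} (equal to 1 if n = k and 0 otherwise). That is, under the classical umbral pairing ⟨t^m/m! | x^n⟩ = δ_{m,n}, the basis {τ_{λ,n}(t)} is dual to {e_λ(x)^n}, so the λ-umbral pairing is compatible with the classical (weight-zero) umbral pairing. -/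

import Mathlib

open Finset PowerSeries

/-- `τ_{λ,n}(t) = (1/n!)·∏_{j=0}^{n−1}(t − j·λ)`, viewed in `C[[t]]`. -/
noncomputable def tauX {C : Type*} [CommRing C] [Algebra ℚ C] (lam : C) (n : ℕ) :
    PowerSeries C :=
  ((n.factorial : ℚ)⁻¹) • ∏ j ∈ Finset.range n, (PowerSeries.X - PowerSeries.C ((j : C) * lam))

/-- `e_λ(x) = ∑_{m=1}^{∞} λ^{m−1}·x^m/m! ∈ C[[x]]`. -/
noncomputable def elam {C : Type*} [CommRing C] [Algebra ℚ C] (lam : C) : PowerSeries C :=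
  PowerSeries.mk fun m => if m = 0 then 0 else ((m.factorial : ℚ)⁻¹) • lam ^ (m - 1)

section Aux

variable {R : Type*} [CommRing R] [Algebra ℚ R] (lam : R)

/-- unnormalized tau -/
noncomputable def TT (n : ℕ) : PowerSeries R :=
  ∏ j ∈ Finset.range n, (PowerSeries.X - PowerSeries.C ((j : R) * lam))

lemma TT_succ (n : ℕ) :
    TT lam (n + 1) = TT lam n * (X - PowerSeries.C ((n : R) * lam)) := by
  rw [TT, Finset.prod_range_succ, TT]

lemma coeff_TT_zero {m n : ℕ} (h : n < m) : coeff m (TT lam n) = 0 := by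
  induction n generalizing m with
  | zero => simp [TT, coeff_one]; omega
  | succ n ih =>
    obtain ⟨m, rfl⟩ : ∃ m', m = m' + 1 := ⟨m - 1, by omega⟩
    rw [TT_succ, mul_sub, map_sub, coeff_succ_mul_X, mul_comm (TT lam n), coeff_C_mul,
      ih (by omega), ih (by omega), mul_zero, sub_zero]

lemma elam_deriv : (d⁄dX R) (elam lam) = 1 + PowerSeries.C lam * elam lam := by
  ext m
  rw [coeff_derivative, map_add, coeff_C_mul]
  simp only [elam, coeff_mk, coeff_one]
  cases m with
  | zero => simp
  | succ m =>
    simp only [Nat.succ_ne_zero, if_false, Nat.add_sub_cancel, if_neg (Nat.succ_ne_zero m)]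
    cases m with
    | zero =>
      simp only [Nat.factorial, pow_zero, mul_one, pow_one, Nat.cast_one, Nat.cast_zero,
        zero_add, mul_zero, if_pos rfl]
      have h2 : ((1:R)+1) = algebraMap ℚ R 2 := by
        rw [map_ofNat]; norm_num
      rw [Algebra.smul_def, h2, mul_right_comm, ← map_mul]
      norm_num
    | succ m =>
      have key : (((m + 3).factorial : ℚ)⁻¹) * ((m : ℚ) + 3) = ((m+2).factorial : ℚ)⁻¹ := by
        have : (m+3).factorial = (m+3) * (m+2).factorial := Nat.factorial_succ (m+2)
        rw [this]
        push_cast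
        rw [mul_inv]
        have h1 : ((m:ℚ) + 3) ≠ 0 := by positivity
        field_simp
      have h2 : ((↑(m+1+1):R) + 1) = algebraMap ℚ R ((m:ℚ)+3) := by
        push_cast
        simp only [map_add, map_natCast, map_ofNat]
        ring
      rw [Algebra.smul_def, Algebra.smul_def, zero_add,
        h2, mul_right_comm, ← map_mul,
        show ((m + 1 + 1 + 1):ℕ) = m + 3 from rfl,
        show ((m + 1 + 1):ℕ) = m + 2 from rfl, key]
      ring

lemma coeff_elam_pow_rec (k m : ℕ) :
    coeff (m + 1) (elam lam ^ (k + 1)) * ((m : R) + 1) =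
      ((k : R) + 1) * (coeff m (elam lam ^ k) + lam * coeff m (elam lam ^ (k + 1))) := by
  have h := Derivation.leibniz_pow (d⁄dX R) (elam lam) (k + 1)
  rw [elam_deriv] at h
  have h2 : coeff (m + 1) (elam lam ^ (k + 1)) * ((m : R) + 1) =
      coeff m ((d⁄dX R) (elam lam ^ (k + 1))) := by
    rw [coeff_derivative]
  rw [h2, h]
  simp only [Nat.add_sub_cancel]
  rw [map_nsmul, smul_eq_mul, mul_add, mul_one, mul_left_comm, ← pow_succ, map_add,
    coeff_C_mul, nsmul_eq_mul]
  push_cast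
  ring

lemma coeff_zero_elam_pow (k : ℕ) :
    coeff 0 (elam lam ^ k) = if k = 0 then 1 else 0 := by
  rw [coeff_zero_eq_constantCoeff, map_pow]
  have h0 : constantCoeff (elam lam) = 0 := by
    rw [elam, ← coeff_zero_eq_constantCoeff, coeff_mk]; simp
  rw [h0, zero_pow_eq]

lemma Q_eq (n k : ℕ) :
    ∑ m ∈ Finset.range (n + 1),
      (m.factorial : R) * coeff m (TT lam n) * coeff m (elam lam ^ k) =
    if n = k then (n.factorial : R) else 0 := by
  induction n generalizing k with
  | zero =>
    rw [Finset.sum_range_one, coeff_zero_elam_pow]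
    have : coeff 0 (TT lam 0) = 1 := by rw [TT]; simp
    rw [this]
    cases k <;> simp
  | succ n ih =>
    have hsplit : ∀ m, coeff m (TT lam (n+1)) =
        coeff m (TT lam n * X) - ((n : R) * lam) * coeff m (TT lam n) := by
      intro m
      rw [TT_succ, mul_sub, map_sub, mul_comm (TT lam n) (PowerSeries.C _), coeff_C_mul]
    have expand : ∑ m ∈ Finset.range (n + 1 + 1),
        (m.factorial : R) * coeff m (TT lam (n+1)) * coeff m (elam lam ^ k)
        = (∑ m ∈ Finset.range (n + 1 + 1),
            (m.factorial : R) * coeff m (TT lam n * X) * coeff m (elam lam ^ k))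
          - ((n : R) * lam) * ∑ m ∈ Finset.range (n + 1),
            (m.factorial : R) * coeff m (TT lam n) * coeff m (elam lam ^ k) := by
      calc ∑ m ∈ Finset.range (n + 1 + 1),
            (m.factorial : R) * coeff m (TT lam (n+1)) * coeff m (elam lam ^ k)
          = ∑ m ∈ Finset.range (n + 1 + 1),
              ((m.factorial : R) * coeff m (TT lam n * X) * coeff m (elam lam ^ k)
               - ((n : R) * lam) *
                ((m.factorial : R) * coeff m (TT lam n) * coeff m (elam lam ^ k))) := by
            apply Finset.sum_congr rfl
            intro m _
            rw [hsplit m]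
            ring
        _ = (∑ m ∈ Finset.range (n + 1 + 1),
              (m.factorial : R) * coeff m (TT lam n * X) * coeff m (elam lam ^ k))
            - ∑ m ∈ Finset.range (n + 1 + 1), ((n : R) * lam) *
                ((m.factorial : R) * coeff m (TT lam n) * coeff m (elam lam ^ k)) :=
            Finset.sum_sub_distrib _ _
        _ = _ := by
            rw [Finset.sum_range_succ (fun m => ((n : R) * lam) *
              ((m.factorial : R) * coeff m (TT lam n) * coeff m (elam lam ^ k))),
              coeff_TT_zero lam (Nat.lt_succ_self n), Finset.mul_sum]
            simp only [mul_zero, zero_mul, add_zero, mul_assoc]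
    have shift : ∑ m ∈ Finset.range (n + 1 + 1),
        (m.factorial : R) * coeff m (TT lam n * X) * coeff m (elam lam ^ k)
        = ∑ i ∈ Finset.range (n + 1),
          ((i.factorial : R) * coeff i (TT lam n)) *
            (coeff (i+1) (elam lam ^ k) * ((i : R) + 1)) := by
      rw [Finset.sum_range_succ' (fun m => (m.factorial : R) * coeff m (TT lam n * X)
        * coeff m (elam lam ^ k))]
      rw [coeff_zero_mul_X]
      simp only [Nat.cast_zero, mul_zero, zero_mul, add_zero]
      apply Finset.sum_congr rfl
      intro i _
      rw [coeff_succ_mul_X, Nat.factorial_succ]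
      push_cast
      ring
    rw [expand, shift, ih k]
    cases k with
    | zero =>
      simp only [pow_zero, coeff_one]
      have : ∀ i ∈ Finset.range (n+1),
          ((i.factorial : R) * coeff i (TT lam n)) *
            ((if i + 1 = 0 then (1:R) else 0) * ((i : R) + 1)) = 0 := by
        intro i _; simp
      rw [Finset.sum_congr rfl this, Finset.sum_const_zero]
      by_cases h : n = 0
      · subst h; simp
      · simp [h]
    | succ k' =>
      have step : ∀ i ∈ Finset.range (n+1),
          ((i.factorial : R) * coeff i (TT lam n)) *
            (coeff (i+1) (elam lam ^ (k'+1)) * ((i : R) + 1))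
          = ((k' : R) + 1) * ((i.factorial : R) * coeff i (TT lam n)
              * coeff i (elam lam ^ k'))
            + ((k' : R) + 1) * lam * ((i.factorial : R) * coeff i (TT lam n)
              * coeff i (elam lam ^ (k'+1))) := by
        intro i _
        rw [coeff_elam_pow_rec lam k' i]
        ring
      rw [Finset.sum_congr rfl step, Finset.sum_add_distrib, ← Finset.mul_sum, ← Finset.mul_sum,
        ih k', ih (k'+1)]
      split_ifs <;>
        first
          | omega
          | (subst_vars; push_cast [Nat.factorial_succ]; ring)

end Aux

/-- Under the classical umbral pairing `⟨t^m/m! | x^n⟩ = δ_{m,n}`, the basis `{τ_{λ,n}(t)}`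
is dual to `{e_λ(x)^n}`:
`∑_{m=0}^{n} m!·(coeff of t^m in τ_{λ,n})·(coeff of x^m in e_λ^k) = δ_{n,k}`.
Hence the `λ`-umbral pairing is compatible with the classical (weight-zero) pairing. -/
theorem tauX_elam_pow_pairing {C : Type*} [CommRing C] [Algebra ℚ C] (lam : C) (n k : ℕ) :
    ∑ m ∈ Finset.range (n + 1),
      (m.factorial : C) * PowerSeries.coeff m (tauX lam n) *
        PowerSeries.coeff m ((elam lam) ^ k) = if n = k then 1 else 0 := by
  have htau : ∀ m, PowerSeries.coeff m (tauX lam n)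
      = ((n.factorial : ℚ)⁻¹) • PowerSeries.coeff m (TT lam n) := by
    intro m
    rw [tauX, TT, LinearMap.map_smul_of_tower]
  have : ∑ m ∈ Finset.range (n + 1),
      (m.factorial : C) * PowerSeries.coeff m (tauX lam n) *
        PowerSeries.coeff m ((elam lam) ^ k)
      = ((n.factorial : ℚ)⁻¹) • ∑ m ∈ Finset.range (n + 1),
      (m.factorial : C) * PowerSeries.coeff m (TT lam n) *
        PowerSeries.coeff m ((elam lam) ^ k) := by
    rw [Finset.smul_sum]
    apply Finset.sum_congr rfl
    intro m _
    rw [htau m, Algebra.smul_def, Algebra.smul_def]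
    ring
  rw [this, Q_eq]
  split_ifs with h
  · rw [show ((n.factorial : C)) = algebraMap ℚ C (n.factorial : ℚ) by simp,
      Algebra.smul_def, ← map_mul, inv_mul_cancel₀ (by exact_mod_cast n.factorial_ne_zero),
      map_one]
  · rw [smul_zero]
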